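/- Existence of event points at gap distance: let (f,g) be a nucleus point of M (g = M^* f and f = M_* g) and let (c₀,d₀) ∈ C × D with λ := M(c₀,d₀) − f(c₀) − g(d₀) > 0. Then there exists a nucleus point (f',g') of M with M(c₀,d₀) − f'(c₀) − g'(d₀) = 0 (so (c₀,d₀) is a witness pair for (f',g')) such that max( osc(f − f'), osc(g − g') ) = λ. -/

import Mathlib

/-- Isbell upper transform: `(M^* f)(d) = min_{c} (M c d - f c)`. -/
noncomputable def isbellStar {C D : Type*} [Fintype C] [Nonempty C]
    (M : C → D → ℝ) (f : C → ℝ) : D → ℝ :=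
  fun d => Finset.univ.inf' Finset.univ_nonempty (fun c => M c d - f c)

/-- Isbell lower transform: `(M_* g)(c) = min_{d} (M c d - g d)`. -/
noncomputable def isbellLow {C D : Type*} [Fintype D] [Nonempty D]
    (M : C → D → ℝ) (g : D → ℝ) : C → ℝ :=
  fun c => Finset.univ.inf' Finset.univ_nonempty (fun d => M c d - g d)

/-- Oscillation (max-spread) of a function on a nonempty finite type. -/
noncomputable def osc {C : Type*} [Fintype C] [Nonempty C] (h : C → ℝ) : ℝ :=
  Finset.univ.sup' Finset.univ_nonempty h - Finset.univ.inf' Finset.univ_nonempty h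

/-- Existence of event points at gap distance: if `(f,g)` is a nucleus point
with positive gap `λ` at `(c₀,d₀)`, there is a nucleus point `(f',g')` at
distance exactly `λ` for which `(c₀,d₀)` is a witness pair. -/
theorem exists_event_point {C D : Type*} [Fintype C] [Nonempty C]
    [Fintype D] [Nonempty D] (M : C → D → ℝ) (f : C → ℝ) (g : D → ℝ)
    (hg : g = isbellStar M f) (hf : f = isbellLow M g)
    (c₀ : C) (d₀ : D) (hpos : 0 < M c₀ d₀ - f c₀ - g d₀) :
    ∃ f' : C → ℝ, ∃ g' : D → ℝ,
      g' = isbellStar M f' ∧ f' = isbellLow M g' ∧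
      M c₀ d₀ - f' c₀ - g' d₀ = 0 ∧
      max (osc (fun c => f c - f' c)) (osc (fun d => g d - g' d))
        = M c₀ d₀ - f c₀ - g d₀ := by
  classical
  set lam := M c₀ d₀ - f c₀ - g d₀ with hlam
  set fl : C → ℝ := fun c => f c + if c = c₀ then lam else 0 with hfl
  set g' : D → ℝ := isbellStar M fl with hg'
  set f' : C → ℝ := isbellLow M g' with hf'
  -- basic inequalities from the nucleus property
  have hgle : ∀ c d, g d ≤ M c d - f c := by
    intro c d; rw [hg]; exact Finset.inf'_le _ (Finset.mem_univ c)
  have hfle : ∀ c d, f c ≤ M c d - g d := by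
    intro c d; rw [hf]; exact Finset.inf'_le _ (Finset.mem_univ d)
  have hfatt : ∀ c, ∃ d, f c = M c d - g d := by
    intro c
    obtain ⟨d, _, hd⟩ := Finset.exists_mem_eq_inf' Finset.univ_nonempty
      (fun d => M c d - g d)
    exact ⟨d, by rw [hf]; exact hd⟩
  have hg'le : ∀ c d, g' d ≤ M c d - fl c := by
    intro c d; exact Finset.inf'_le _ (Finset.mem_univ c)
  have hf'le : ∀ c d, f' c ≤ M c d - g' d := by
    intro c d; exact Finset.inf'_le _ (Finset.mem_univ d)
  have hflf : ∀ c, f c ≤ fl c := by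
    intro c; simp only [hfl]; split <;> linarith
  have hflc0 : fl c₀ = f c₀ + lam := by simp [hfl]
  -- g' ≤ g
  have hg'leg : ∀ d, g' d ≤ g d := by
    intro d; rw [hg]
    apply Finset.le_inf'; intro c _
    exact le_trans (hg'le c d) (by linarith [hflf c])
  -- g - lam ≤ g'
  have hgl : ∀ d, g d - lam ≤ g' d := by
    intro d
    apply Finset.le_inf'; intro c _
    simp only [hfl]
    by_cases h : c = c₀
    · rw [if_pos h, h]; linarith [hgle c₀ d]
    · rw [if_neg h]; linarith [hgle c d]
  -- g' d₀ = g d₀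
  have hgd0 : g' d₀ = g d₀ := by
    refine le_antisymm (hg'leg d₀) ?_
    apply Finset.le_inf'; intro c _
    simp only [hfl]
    by_cases h : c = c₀
    · rw [if_pos h, h]; linarith
    · rw [if_neg h]; linarith [hgle c d₀]
  -- fl ≤ f'
  have hflf' : ∀ c, fl c ≤ f' c := by
    intro c
    apply Finset.le_inf'; intro d _
    linarith [hg'le c d]
  -- f' c₀ = f c₀ + lam
  have hfc0 : f' c₀ = f c₀ + lam := by
    have h1 : f' c₀ ≤ M c₀ d₀ - g' d₀ := hf'le c₀ d₀
    rw [hgd0] at h1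
    have h2 := hflf' c₀
    rw [hflc0] at h2
    linarith
  -- f ≤ f' and f' ≤ f + lam
  have hff' : ∀ c, f c ≤ f' c := fun c => le_trans (hflf c) (hflf' c)
  have hf'ub : ∀ c, f' c ≤ f c + lam := by
    intro c
    obtain ⟨d, hd⟩ := hfatt c
    have h1 := hf'le c d
    have h2 := hgl d
    linarith
  -- witness d₁ where g' drops by exactly lam
  obtain ⟨d₁, hd₁⟩ := hfatt c₀
  have hgd1 : g' d₁ = g d₁ - lam := by
    refine le_antisymm ?_ (hgl d₁)
    have h1 := hg'le c₀ d₁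
    rw [hflc0] at h1
    linarith
  -- nucleus property: g' = isbellStar M f'
  have hnuc : g' = isbellStar M f' := by
    funext d
    apply le_antisymm
    · apply Finset.le_inf'; intro c _
      linarith [hf'le c d]
    · obtain ⟨c₂, _, hc₂⟩ := Finset.exists_mem_eq_inf' Finset.univ_nonempty
        (fun c => M c d - fl c)
      have hgd : g' d = M c₂ d - fl c₂ := hc₂
      calc isbellStar M f' d ≤ M c₂ d - f' c₂ := Finset.inf'_le _ (Finset.mem_univ c₂)
        _ ≤ M c₂ d - fl c₂ := by linarith [hflf' c₂]
        _ = g' d := hgd.symm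
  -- oscillation of g - g' equals lam
  have hoscg : osc (fun d => g d - g' d) = lam := by
    unfold osc
    have hsup : Finset.univ.sup' Finset.univ_nonempty (fun d => g d - g' d) = lam := by
      refine le_antisymm (Finset.sup'_le _ _ fun d _ => by linarith [hgl d]) ?_
      have := Finset.le_sup' (fun d => g d - g' d) (Finset.mem_univ d₁)
      rw [hgd1] at this
      linarith
    have hinf : Finset.univ.inf' Finset.univ_nonempty (fun d => g d - g' d) = 0 := by
      refine le_antisymm ?_ (Finset.le_inf' _ _ fun d _ => by linarith [hg'leg d])
      have := Finset.inf'_le (fun d => g d - g' d) (Finset.mem_univ d₀)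
      rw [hgd0] at this
      linarith
    rw [hsup, hinf]; ring
  -- oscillation of f - f' is at most lam
  have hoscf : osc (fun c => f c - f' c) ≤ lam := by
    unfold osc
    have hsup : Finset.univ.sup' Finset.univ_nonempty (fun c => f c - f' c) ≤ 0 :=
      Finset.sup'_le _ _ fun c _ => by linarith [hff' c]
    have hinf : -lam ≤ Finset.univ.inf' Finset.univ_nonempty (fun c => f c - f' c) :=
      Finset.le_inf' _ _ fun c _ => by linarith [hf'ub c]
    linarith
  refine ⟨f', g', hnuc, hf', ?_, ?_⟩
  · rw [hfc0, hgd0]; linarith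
  · rw [hoscg]
    exact max_eq_right hoscf
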